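/- For every edge set E ⊆ (V choose 2), [Γ^{Ā}]_E ≤ ᾱ^{v−c(E)}, with equality whenever the graph (V,E) is a forest (contains no cycle). -/

import Mathlib

open scoped Classical

noncomputable section

/-- Number of connected components of the graph on `V` with edge set `E`. -/
def cComp (V : Type) [Fintype V] (E : Finset (Sym2 V)) : ℕ :=
  Nat.card (SimpleGraph.fromEdgeSet (E : Set (Sym2 V))).ConnectedComponent

/-- `E` is isthmus-free: it contains no edge whose removal increases the number
of connected components. -/
def IsthmusFree (V : Type) [Fintype V] (E : Finset (Sym2 V)) : Prop :=
  ∀ t ∈ E, ¬ cComp V (E.erase t) > cComp V E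

/-- Möbius function of the poset `P_V` of isthmus-free edge sets on `V`,
ordered by inclusion: `μ(K,K) = 1` and `∑_{L ∈ P_V, K ⊆ L ⊆ H} μ(K,L) = 0` for `K ⊊ H`. -/
def muPV (V : Type) [Fintype V] (K H : Finset (Sym2 V)) : ℤ :=
  if K = H then 1
  else - ∑ L ∈ ((H.powerset.filter (fun L => K ⊆ L ∧ L ≠ H ∧ IsthmusFree V L)).attach),
      muPV V K L.1
termination_by H.card
decreasing_by
  have hL := L.2
  simp only [Finset.mem_filter, Finset.mem_powerset] at hL
  exact Finset.card_lt_card (lt_of_le_of_ne hL.1 hL.2.2.1)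

/-- `[Γ^A]_E`: the probability that a uniformly random coloring `X : V → F` has all
differences along edges of `E` inside `A`. -/
def Gamma (V : Type) [Fintype V] (F : Type) [Fintype F] [AddCommGroup F]
    (A : Finset F) (E : Finset (Sym2 V)) : ℝ :=
  (Nat.card {X : V → F //
      ∀ e ∈ E, ∀ u w : V, e = s(u, w) → X u - X w ∈ A} : ℝ) /
    (Fintype.card F : ℝ) ^ (Fintype.card V)

end


section Aux
open SimpleGraph
section
variable {V : Type}
-- walk lemma
lemma walk_reach {V : Type*} {G G' : SimpleGraph V} {u w : V}
    (hadj : ∀ a b, G.Adj a b → G'.Adj a b ∨ s(a,b) = s(u,w)) :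
    ∀ {x y : V}, G.Reachable x y →
      G'.Reachable x y ∨ (G'.Reachable x u ∧ G'.Reachable w y) ∨
        (G'.Reachable x w ∧ G'.Reachable u y) := by
  intro x y ⟨p⟩
  induction p with
  | nil => exact Or.inl (Reachable.refl _)
  | @cons a b c h p ih =>
    rcases hadj _ _ h with h' | h' 
    · rcases ih with h2 | ⟨h2, h3⟩ | ⟨h2, h3⟩
      · exact Or.inl (h'.reachable.trans h2)
      · exact Or.inr (Or.inl ⟨h'.reachable.trans h2, h3⟩)
      · exact Or.inr (Or.inr ⟨h'.reachable.trans h2, h3⟩)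
    · rw [Sym2.eq_iff] at h'
      rcases h' with ⟨rfl, rfl⟩ | ⟨rfl, rfl⟩
      · rcases ih with h2 | ⟨h2, h3⟩ | ⟨h2, h3⟩
        · exact Or.inr (Or.inl ⟨Reachable.refl _, h2⟩)
        · exact Or.inl (h2.symm.trans h3)
        · exact Or.inl h3
      · rcases ih with h2 | ⟨h2, h3⟩ | ⟨h2, h3⟩
        · exact Or.inr (Or.inr ⟨Reachable.refl _, h2⟩)
        · exact Or.inl h3
        · exact Or.inl (h2.symm.trans h3)

end


variable {V : Type} [Fintype V]

lemma adj_cases {E : Finset (Sym2 V)} {e : Sym2 V} {u w : V} (he : e ∈ E) (heq : e = s(u,w)) :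
    ∀ a b, (fromEdgeSet (E : Set (Sym2 V))).Adj a b →
      (fromEdgeSet ((E.erase e : Finset (Sym2 V)) : Set (Sym2 V))).Adj a b ∨ s(a,b) = s(u,w) := by
  intro a b hab
  rw [fromEdgeSet_adj] at hab
  by_cases h : s(a,b) = e
  · exact Or.inr (h.trans heq)
  · exact Or.inl (by rw [fromEdgeSet_adj]; exact ⟨by simp [Finset.mem_erase, h, hab.1], hab.2⟩)

lemma card_cc_of_reach {E : Finset (Sym2 V)} {e : Sym2 V} {u w : V} (he : e ∈ E)
    (heq : e = s(u,w))
    (hr : (fromEdgeSet ((E.erase e : Finset (Sym2 V)) : Set (Sym2 V))).Reachable u w) :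
    cComp V (E.erase e) = cComp V E := by
  set G' := fromEdgeSet ((E.erase e : Finset (Sym2 V)) : Set (Sym2 V)) with hG'
  set G := fromEdgeSet (E : Set (Sym2 V)) with hG
  have hle : G' ≤ G := fromEdgeSet_mono (by exact_mod_cast Finset.erase_subset e E)
  have hrel : G'.Reachable = G.Reachable := by
    funext x y
    apply propext
    constructor
    · exact fun h => h.mono hle
    · intro h
      rcases walk_reach (adj_cases he heq) h with h'|⟨h1,h2⟩|⟨h1,h2⟩
      · exact h'
      · exact (h1.trans hr).trans h2
      · exact (h1.trans hr.symm).trans h2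
  show Nat.card G'.ConnectedComponent = Nat.card G.ConnectedComponent
  unfold SimpleGraph.ConnectedComponent
  rw [hrel]

lemma card_cc_of_not_reach {E : Finset (Sym2 V)} {e : Sym2 V} {u w : V} (he : e ∈ E)
    (heq : e = s(u,w))
    (hnr : ¬ (fromEdgeSet ((E.erase e : Finset (Sym2 V)) : Set (Sym2 V))).Reachable u w) :
    cComp V (E.erase e) = cComp V E + 1 := by
  set G' := fromEdgeSet ((E.erase e : Finset (Sym2 V)) : Set (Sym2 V)) with hG'
  set G := fromEdgeSet (E : Set (Sym2 V)) with hG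
  have hle : G' ≤ G := fromEdgeSet_mono (by exact_mod_cast Finset.erase_subset e E)
  have huw : u ≠ w := fun h => hnr (h ▸ Reachable.refl u)
  have hadjuw : G.Adj u w := by
    rw [hG, fromEdgeSet_adj]; exact ⟨by simp [← heq, he], huw⟩
  have key : ∀ x y, G.Reachable x y → G'.Reachable x y ∨
      (G'.Reachable x u ∧ G'.Reachable w y) ∨ (G'.Reachable x w ∧ G'.Reachable u y) :=
    fun x y h => walk_reach (adj_cases he heq) h
  have wd1 : ∀ x y, G'.Reachable x y →
      (if G'.Reachable w x then (Sum.inr () : G.ConnectedComponent ⊕ Unit)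
        else Sum.inl (G.connectedComponentMk x)) =
      (if G'.Reachable w y then Sum.inr () else Sum.inl (G.connectedComponentMk y)) := by
    intro x y h
    by_cases hx : G'.Reachable w x
    · rw [if_pos hx, if_pos (hx.trans h)]
    · rw [if_neg hx, if_neg (fun hy => hx (hy.trans h.symm))]
      exact congrArg _ (ConnectedComponent.sound (h.mono hle))
  have wd2 : ∀ x y, G.Reachable x y →
      (if G'.Reachable w x then G'.connectedComponentMk u else G'.connectedComponentMk x) =
      (if G'.Reachable w y then G'.connectedComponentMk u else G'.connectedComponentMk y) := by
    intro x y h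
    rcases key x y h with h'|⟨h1,h2⟩|⟨h1,h2⟩
    · by_cases hx : G'.Reachable w x
      · rw [if_pos hx, if_pos (hx.trans h')]
      · rw [if_neg hx, if_neg (fun hy => hx (hy.trans h'.symm)), ConnectedComponent.eq]
        exact h'
    · have hx : ¬ G'.Reachable w x := fun hwx => hnr (hwx.trans h1).symm
      rw [if_neg hx, if_pos h2, ConnectedComponent.eq]
      exact h1
    · have hy : ¬ G'.Reachable w y := fun hwy => hnr (h2.trans hwy.symm)
      rw [if_pos h1.symm, if_neg hy, ConnectedComponent.eq]
      exact h2
  let fwd : G'.ConnectedComponent → G.ConnectedComponent ⊕ Unit := Quot.lift _ wd1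
  let bwd : G.ConnectedComponent ⊕ Unit → G'.ConnectedComponent :=
    Sum.elim (Quot.lift _ wd2) (fun _ => G'.connectedComponentMk w)
  have eqv : G'.ConnectedComponent ≃ G.ConnectedComponent ⊕ Unit := by
    refine ⟨fwd, bwd, ?_, ?_⟩
    · intro c
      refine ConnectedComponent.ind (fun x => ?_) c
      show bwd (if G'.Reachable w x then Sum.inr () else Sum.inl (G.connectedComponentMk x)) =
        G'.connectedComponentMk x
      by_cases hx : G'.Reachable w x
      · rw [if_pos hx]
        exact ConnectedComponent.sound hx
      · rw [if_neg hx]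
        show (if G'.Reachable w x then G'.connectedComponentMk u else G'.connectedComponentMk x) = _
        rw [if_neg hx]
    · intro d
      rcases d with d | u'
      · refine ConnectedComponent.ind (fun x => ?_) d
        show fwd (if G'.Reachable w x then G'.connectedComponentMk u else G'.connectedComponentMk x)
          = Sum.inl (G.connectedComponentMk x)
        by_cases hx : G'.Reachable w x
        · rw [if_pos hx]
          show (if G'.Reachable w u then (Sum.inr () : G.ConnectedComponent ⊕ Unit)
            else Sum.inl (G.connectedComponentMk u)) = _
          rw [if_neg (fun h => hnr h.symm)]
          exact congrArg _ (ConnectedComponent.sound (hadjuw.reachable.trans (hx.mono hle)))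
        · rw [if_neg hx]
          show (if G'.Reachable w x then (Sum.inr () : G.ConnectedComponent ⊕ Unit)
            else Sum.inl (G.connectedComponentMk x)) = _
          rw [if_neg hx]
      · show fwd (G'.connectedComponentMk w) = Sum.inr u'
        show (if G'.Reachable w w then (Sum.inr () : G.ConnectedComponent ⊕ Unit)
          else Sum.inl (G.connectedComponentMk w)) = _
        rw [if_pos (Reachable.refl w)]
  show Nat.card G'.ConnectedComponent = Nat.card G.ConnectedComponent + 1
  rw [Nat.card_congr eqv, Nat.card_sum]
  simp

noncomputable section
variable (V : Type) [Fintype V] (F : Type) [Fintype F] [AddCommGroup F]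

def cntP (B : Finset F) (E : Finset (Sym2 V)) : ℕ :=
  Nat.card {X : V → F // ∀ e ∈ E, ∀ u w : V, e = s(u, w) → X u - X w ∈ B}

variable {V F}

lemma cntP_empty (B : Finset F) : cntP V F B ∅ = Fintype.card F ^ Fintype.card V := by
  rw [cntP]
  rw [Nat.card_congr (Equiv.subtypeUnivEquiv (by simp))]
  simp [Nat.card_eq_fintype_card]

lemma cntP_mono (B : Finset F) {E' E : Finset (Sym2 V)} (h : E' ⊆ E) :
    cntP V F B E ≤ cntP V F B E' := by
  apply Nat.card_le_card_of_injective
    (fun X => (⟨X.1, fun e he => X.2 e (h he)⟩ : {X : V → F // ∀ e ∈ E', ∀ u w : V, e = s(u, w) → X u - X w ∈ B}))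
  intro X Y hXY
  simp only [Subtype.mk.injEq] at hXY
  exact Subtype.ext hXY

def shiftW (G' : SimpleGraph V) (w : V) (t : F) (X : V → F) : V → F :=
  fun x => X x + if G'.Reachable w x then t else 0

lemma shiftW_shiftW (G' : SimpleGraph V) (w : V) (s t : F) (X : V → F) :
    shiftW G' w s (shiftW G' w t X) = shiftW G' w (s + t) X := by
  funext x
  by_cases h : G'.Reachable w x
  · simp only [shiftW, if_pos h]; abel
  · simp only [shiftW, if_neg h]; abel

lemma shiftW_zero (G' : SimpleGraph V) (w : V) (X : V → F) : shiftW G' w 0 X = X := by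
  funext x; simp [shiftW]

lemma cntP_bridge {B : Finset F} (hB : ∀ a, a ∈ B → -a ∈ B) {E : Finset (Sym2 V)}
    {e : Sym2 V} {u w : V} (he : e ∈ E) (heq : e = s(u,w))
    (hnd : ∀ e' ∈ E, ¬ e'.IsDiag)
    (hnr : ¬ (fromEdgeSet ((E.erase e : Finset (Sym2 V)) : Set (Sym2 V))).Reachable u w) :
    cntP V F B E * Fintype.card F = B.card * cntP V F B (E.erase e) := by
  set G' := fromEdgeSet ((E.erase e : Finset (Sym2 V)) : Set (Sym2 V)) with hG'
  have huw : u ≠ w := fun h => hnr (h ▸ Reachable.refl u)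
  have hwu : ¬ G'.Reachable w u := fun h => hnr h.symm
  -- the shift preserves the constraints of `E.erase e`
  have hPshift : ∀ (t : F) (X : V → F),
      (∀ e' ∈ E.erase e, ∀ a b : V, e' = s(a, b) → X a - X b ∈ B) →
      ∀ e' ∈ E.erase e, ∀ a b : V, e' = s(a, b) → (shiftW G' w t X) a - (shiftW G' w t X) b ∈ B := by
    intro t X hX e' he' a b heq'
    have hab : a ≠ b := by
      have := hnd e' (Finset.mem_of_mem_erase he')
      rw [heq'] at this
      simpa using this
    have hadj : G'.Adj a b := by
      rw [hG', fromEdgeSet_adj]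
      refine ⟨?_, hab⟩
      rw [← heq']
      exact_mod_cast he'
    have hiff : G'.Reachable w a ↔ G'.Reachable w b :=
      ⟨fun h => h.trans hadj.reachable, fun h => h.trans hadj.reachable.symm⟩
    have := hX e' he' a b heq'
    by_cases hwa : G'.Reachable w a
    · have hwb : G'.Reachable w b := hiff.mp hwa
      simpa [shiftW, hwa, hwb] using this
    · have hwb : ¬ G'.Reachable w b := fun h => hwa (hiff.mpr h)
      simpa [shiftW, hwa, hwb] using this
  have hshift_u : ∀ (t : F) (X : V → F), shiftW G' w t X u = X u := by
    intro t X; simp [shiftW, hwu]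
  have hshift_w : ∀ (t : F) (X : V → F), shiftW G' w t X w = X w + t := by
    intro t X
    show X w + _ = X w + t
    rw [if_pos (Reachable.refl w)]
  -- the set with equal values at u and w
  set S := {X : V → F // (∀ e' ∈ E.erase e, ∀ a b : V, e' = s(a, b) → X a - X b ∈ B) ∧ X u = X w}
    with hS
  -- equiv 1
  have e1 : {X : V → F // ∀ e' ∈ E.erase e, ∀ a b : V, e' = s(a, b) → X a - X b ∈ B} ≃ F × S := by
    refine ⟨fun Y => (Y.1 w - Y.1 u,
        ⟨shiftW G' w (-(Y.1 w - Y.1 u)) Y.1, hPshift _ _ Y.2, ?_⟩),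
      fun p => ⟨shiftW G' w p.1 p.2.1, hPshift _ _ p.2.2.1⟩, ?_, ?_⟩
    · rw [hshift_u, hshift_w]; abel
    · intro Y
      apply Subtype.ext
      show shiftW G' w _ (shiftW G' w _ Y.1) = Y.1
      rw [shiftW_shiftW]
      simp [shiftW_zero]
    · intro p
      have ht : shiftW G' w p.1 p.2.1 w - shiftW G' w p.1 p.2.1 u = p.1 := by
        rw [hshift_u, hshift_w, ← p.2.2.2]; abel
      refine Prod.ext ht ?_
      apply Subtype.ext
      show shiftW G' w _ (shiftW G' w _ p.2.1) = p.2.1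
      rw [ht, shiftW_shiftW]
      simp [shiftW_zero]
  -- decomposition of the full constraint
  have hPE : ∀ Y : V → F, (∀ e' ∈ E, ∀ a b : V, e' = s(a, b) → Y a - Y b ∈ B) ↔
      ((∀ e' ∈ E.erase e, ∀ a b : V, e' = s(a, b) → Y a - Y b ∈ B) ∧ Y u - Y w ∈ B) := by
    intro Y
    constructor
    · intro h
      exact ⟨fun e' he' => h e' (Finset.mem_of_mem_erase he'), h e he u w heq⟩
    · rintro ⟨h1, h2⟩ e' he' a b heq'
      by_cases hee : e' = e
      · rw [hee, heq, Sym2.eq_iff] at heq'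
        rcases heq' with ⟨rfl, rfl⟩ | ⟨rfl, rfl⟩
        · exact h2
        · simpa using hB _ h2
      · exact h1 e' (Finset.mem_erase.mpr ⟨hee, he'⟩) a b heq'
  -- equiv 2
  have e2 : {X : V → F // ∀ e' ∈ E, ∀ a b : V, e' = s(a, b) → X a - X b ∈ B} ≃
      {t : F // t ∈ B} × S := by
    refine ⟨fun Y => (⟨Y.1 w - Y.1 u, ?_⟩,
        ⟨shiftW G' w (-(Y.1 w - Y.1 u)) Y.1, hPshift _ _ ((hPE Y.1).mp Y.2).1, ?_⟩),
      fun p => ⟨shiftW G' w p.1.1 p.2.1, ?_⟩, ?_, ?_⟩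
    · have := ((hPE Y.1).mp Y.2).2
      simpa using hB _ this
    · rw [hshift_u, hshift_w]; abel
    · refine (hPE _).mpr ⟨hPshift _ _ p.2.2.1, ?_⟩
      rw [hshift_u, hshift_w, p.2.2.2]
      simpa using hB _ p.1.2
    · intro Y
      apply Subtype.ext
      show shiftW G' w _ (shiftW G' w _ Y.1) = Y.1
      rw [shiftW_shiftW]
      simp [shiftW_zero]
    · intro p
      have ht : shiftW G' w p.1.1 p.2.1 w - shiftW G' w p.1.1 p.2.1 u = p.1.1 := by
        rw [hshift_u, hshift_w, ← p.2.2.2]; abel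
      refine Prod.ext (Subtype.ext ht) ?_
      apply Subtype.ext
      show shiftW G' w _ (shiftW G' w _ p.2.1) = p.2.1
      rw [ht, shiftW_shiftW]
      simp [shiftW_zero]
  rw [cntP, cntP, Nat.card_congr e1, Nat.card_congr e2, Nat.card_prod, Nat.card_prod]
  simp [Nat.card_eq_fintype_card, Fintype.card_coe]
  ring
end


section
variable {V : Type} [Fintype V]

lemma cComp_empty : cComp V (∅ : Finset (Sym2 V)) = Fintype.card V := by
  show Nat.card (fromEdgeSet _).ConnectedComponent = _
  have h : fromEdgeSet (((∅ : Finset (Sym2 V))) : Set (Sym2 V)) = ⊥ := by simp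
  rw [h, ← Nat.card_eq_fintype_card]
  refine (Nat.card_congr (Equiv.ofBijective
    (fun v => (⊥ : SimpleGraph V).connectedComponentMk v) ⟨?_, ?_⟩)).symm
  · intro a b hab
    simpa [reachable_bot] using ConnectedComponent.exact hab
  · exact Quot.mk_surjective

lemma cComp_le (E : Finset (Sym2 V)) : cComp V E ≤ Fintype.card V := by
  rw [← Nat.card_eq_fintype_card]
  exact Nat.card_le_card_of_surjective
    (fun v => (fromEdgeSet (E : Set (Sym2 V))).connectedComponentMk v) Quot.mk_surjective

end

section
variable {V : Type} [Fintype V] {F : Type} [Fintype F] [AddCommGroup F]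

lemma main_count {B : Finset F} (hB : ∀ a, a ∈ B → -a ∈ B) (E : Finset (Sym2 V))
    (hnd : ∀ e ∈ E, ¬ e.IsDiag) :
    cntP V F B E ≤ B.card ^ (Fintype.card V - cComp V E) * Fintype.card F ^ (cComp V E) ∧
      ((fromEdgeSet (E : Set (Sym2 V))).IsAcyclic →
        cntP V F B E = B.card ^ (Fintype.card V - cComp V E) * Fintype.card F ^ (cComp V E)) := by
  induction E using Finset.strongInduction with
  | _ E ih =>
  have hnd : ∀ e ∈ E, ¬ e.IsDiag := hnd
  rcases Finset.eq_empty_or_nonempty E with rfl | ⟨e, he⟩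
  · rw [cntP_empty, cComp_empty, Nat.sub_self, pow_zero, one_mul]
    exact ⟨le_refl _, fun _ => rfl⟩
  · obtain ⟨⟨u, w⟩, hrep⟩ := e.exists_rep
    have heq : e = s(u, w) := hrep.symm
    have huw : u ≠ w := by
      have := hnd e he
      rw [heq] at this
      simpa using this
    have hsub : E.erase e ⊆ E := Finset.erase_subset e E
    have hss : E.erase e ⊂ E := Finset.erase_ssubset he
    have hnd' : ∀ e' ∈ E.erase e, ¬ e'.IsDiag := fun e' he' => hnd e' (hsub he')
    have hle : fromEdgeSet ((E.erase e : Finset (Sym2 V)) : Set (Sym2 V)) ≤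
        fromEdgeSet (E : Set (Sym2 V)) :=
      fromEdgeSet_mono (by exact_mod_cast hsub)
    have hadjuw : (fromEdgeSet (E : Set (Sym2 V))).Adj u w := by
      rw [fromEdgeSet_adj]
      exact ⟨by rw [← heq]; exact_mod_cast he, huw⟩
    have hgraph : fromEdgeSet (E : Set (Sym2 V)) \ fromEdgeSet {s(u, w)} =
        fromEdgeSet ((E.erase e : Finset (Sym2 V)) : Set (Sym2 V)) := by
      ext a b
      simp only [sdiff_adj, fromEdgeSet_adj, Finset.coe_erase, Set.mem_diff,
        Finset.mem_coe, Set.mem_singleton_iff, ← heq]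
      tauto
    by_cases hr : (fromEdgeSet ((E.erase e : Finset (Sym2 V)) : Set (Sym2 V))).Reachable u w
    · -- not a bridge
      have hcc : cComp V (E.erase e) = cComp V E := card_cc_of_reach he heq hr
      have hmono := cntP_mono (V := V) (F := F) B hsub
      have hIH := (ih _ hss hnd').1
      rw [hcc] at hIH
      refine ⟨le_trans hmono hIH, fun hac => absurd hr ?_⟩
      have hbr := (isAcyclic_iff_forall_adj_isBridge.mp hac) hadjuw
      rw [isBridge_iff] at hbr
      rw [← hgraph]; exact hbr
    · -- bridge
      have hcc : cComp V (E.erase e) = cComp V E + 1 := card_cc_of_not_reach he heq hr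
      have hkey := cntP_bridge hB he heq hnd hr
      have hcle : cComp V E + 1 ≤ Fintype.card V := hcc ▸ cComp_le (E.erase e)
      have hfpos : 0 < Fintype.card F := Fintype.card_pos
      set k := Fintype.card V - (cComp V E + 1) with hk
      have hvc : Fintype.card V - cComp V E = k + 1 := by omega
      have hIH := ih _ hss hnd'
      rw [hcc] at hIH
      constructor
      · have h1 : cntP V F B E * Fintype.card F ≤
            (B.card ^ (k + 1) * Fintype.card F ^ (cComp V E)) * Fintype.card F := by
          rw [hkey]
          calc B.card * cntP V F B (E.erase e)
              ≤ B.card * (B.card ^ k * Fintype.card F ^ (cComp V E + 1)) :=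
                Nat.mul_le_mul_left _ hIH.1
            _ = (B.card ^ (k + 1) * Fintype.card F ^ (cComp V E)) * Fintype.card F := by ring
        rw [hvc]
        exact Nat.le_of_mul_le_mul_right h1 hfpos
      · intro hac
        have hac' : (fromEdgeSet ((E.erase e : Finset (Sym2 V)) : Set (Sym2 V))).IsAcyclic :=
          fun v c hc => hac (c.mapLe hle) (hc.mapLe hle)
        have h1 : cntP V F B E * Fintype.card F =
            (B.card ^ (k + 1) * Fintype.card F ^ (cComp V E)) * Fintype.card F := by
          rw [hkey, hIH.2 hac']
          ring
        rw [hvc]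
        exact Nat.eq_of_mul_eq_mul_right hfpos h1

end
end Aux

section Aux2
open SimpleGraph
theorem gamma_compl_le_pow_and_eq_of_acyclic
    (V : Type) [Fintype V] (F : Type) [Fintype F] [AddCommGroup F]
    (A : Finset F) (hA : ∀ a ∈ A, -a ∈ A)
    (E : Finset (Sym2 V)) (hE : ∀ e ∈ E, ¬ e.IsDiag) :
    Gamma V F Aᶜ E ≤
        ((Aᶜ.card : ℝ) / (Fintype.card F : ℝ)) ^ (Fintype.card V - cComp V E) ∧
      ((SimpleGraph.fromEdgeSet (E : Set (Sym2 V))).IsAcyclic →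
        Gamma V F Aᶜ E =
          ((Aᶜ.card : ℝ) / (Fintype.card F : ℝ)) ^ (Fintype.card V - cComp V E)) := by
  have hGamma : Gamma V F Aᶜ E =
      (cntP V F Aᶜ E : ℝ) / (Fintype.card F : ℝ) ^ (Fintype.card V) := rfl
  rw [hGamma]
  have hB : ∀ a, a ∈ Aᶜ → -a ∈ Aᶜ := by
    intro a ha
    simp only [Finset.mem_compl] at ha ⊢
    intro h
    exact ha (by simpa using hA _ h)
  have hmain := main_count hB E hE
  have hfpos : (0:ℝ) < (Fintype.card F : ℝ) := by exact_mod_cast Fintype.card_pos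
  have hc := cComp_le (V := V) E
  have hsplit : ((Fintype.card F : ℝ)) ^ (Fintype.card V) =
      (Fintype.card F : ℝ) ^ (Fintype.card V - cComp V E) *
        (Fintype.card F : ℝ) ^ (cComp V E) := by
    rw [← pow_add]
    congr 1
    omega
  have hrhs : ((Aᶜ.card : ℝ) / (Fintype.card F : ℝ)) ^ (Fintype.card V - cComp V E) =
      ((Aᶜ.card ^ (Fintype.card V - cComp V E) * Fintype.card F ^ (cComp V E) : ℕ) : ℝ) /
        (Fintype.card F : ℝ) ^ (Fintype.card V) := by
    rw [div_pow, hsplit]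
    push_cast
    rw [div_mul_eq_div_div_swap]
    congr 1
    rw [mul_div_assoc, div_self (by positivity), mul_one]
  constructor
  · rw [hrhs]
    apply div_le_div_of_nonneg_right ?_ (by positivity)
    exact_mod_cast hmain.1
  · intro hac
    rw [hrhs]
    congr 1
    exact_mod_cast hmain.2 hac

end Aux2
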